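/- Proposition (key-properties, assertion 2): let g₀, …, g_{n+1}, η₀, …, η_{n+1} be a key-form datum and fix m with 0 ≤ m ≤ n. Then the following are equivalent: (a) g_i is a polynomial for every 0 ≤ i ≤ m+1; (b) for each 1 ≤ i ≤ m, α_i·η_i lies in the sub-semigroup of ℤ consisting of all nonnegative-integer combinations of η₀, η₁, …, η_{i−1}. -/

import Mathlib

noncomputable section

/-- `R₂ = ℂ[x,x⁻¹][y]`, realized as polynomials in `y` over Laurent polynomials in `x`. -/
abbrev RR : Type := Polynomial (LaurentPolynomial ℂ)

/-- The element `x` of `ℂ[x,x⁻¹][y]` (the Laurent variable, a unit of the coefficient ring). -/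
def xR : RR := Polynomial.C (LaurentPolynomial.T 1)

/-- An element of `ℂ[x,x⁻¹][y]` "is a polynomial" if all of its coefficients lie in
`ℂ[x] ⊆ ℂ[x,x⁻¹]`, i.e. it belongs to `ℂ[x,y]`. -/
def IsPolyForm (f : RR) : Prop :=
  ∀ i : ℕ, f.coeff i ∈ (Polynomial.toLaurent (R := ℂ)).range

/-- `α_j`: the least positive integer `α` such that `α·η j` lies in the subgroup
`ℤη₀ + ⋯ + ℤη_{j-1}` of `ℤ`. -/
def alphaVal (η : ℕ → ℤ) (j : ℕ) : ℕ :=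
  sInf {α : ℕ | 0 < α ∧ ∃ β : ℕ → ℤ, (α : ℤ) * η j = ∑ i ∈ Finset.range j, β i * η i}

/-- A key-form datum of length `n`: elements `g 0, …, g (n+1)` of `ℂ[x,x⁻¹][y]` and integers
`η 0, …, η (n+1)` satisfying the defining properties (P0)–(P2) of the key forms of a
semidegree `δ` on `ℂ[x,y]` with `δ(x) > 0` (with `η j = δ (g j)`). -/
structure KeyFormDatum (n : ℕ) where
  g : ℕ → RR
  η : ℕ → ℤ
  hg0 : g 0 = xR
  hg1 : g 1 = Polynomial.X
  hmonic : ∀ j, 1 ≤ j → j ≤ n + 1 → (g j).Monic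
  hη0 : 0 < η 0
  hrec : ∀ j, 1 ≤ j → j ≤ n →
    ∃ (β : ℕ → ℤ) (θ : ℂ), θ ≠ 0 ∧
      (∀ i, 1 ≤ i → i < j → 0 ≤ β i ∧ β i < (alphaVal η i : ℤ)) ∧
      η (j + 1) < (alphaVal η j : ℤ) * η j ∧
      (alphaVal η j : ℤ) * η j = ∑ i ∈ Finset.range j, β i * η i ∧
      g (j + 1) = g j ^ (alphaVal η j) -
        Polynomial.C (LaurentPolynomial.C θ * LaurentPolynomial.T (β 0)) *
          ∏ i ∈ Finset.Ico 1 j, g i ^ (β i).toNat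

/- ### Auxiliary lemmas -/

lemma aux_toLaurent_neg_coeff (p : Polynomial ℂ) (b : ℤ) (hb : b < 0) :
    (Polynomial.toLaurent (R := ℂ) p).coeff b = 0 := by
  induction p using Polynomial.induction_on' with
  | add p q hp hq => rw [map_add, AddMonoidAlgebra.coeff_add, Finsupp.add_apply, hp, hq, add_zero]
  | monomial n a =>
      rw [Polynomial.toLaurent_C_mul_T, ← LaurentPolynomial.single_eq_C_mul_T, AddMonoidAlgebra.coeff_single]
      exact Finsupp.single_eq_of_ne' (by omega)

lemma aux_C_T_nonneg {θ : ℂ} (hθ : θ ≠ 0) {b : ℤ}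
    (h : LaurentPolynomial.C θ * LaurentPolynomial.T b ∈
      Set.range (Polynomial.toLaurent (R := ℂ))) :
    0 ≤ b := by
  obtain ⟨p, hp⟩ := h
  by_contra hb
  push_neg at hb
  have h0 := aux_toLaurent_neg_coeff p b hb
  rw [hp, ← LaurentPolynomial.single_eq_C_mul_T] at h0
  rw [AddMonoidAlgebra.coeff_single, Finsupp.single_eq_same] at h0
  exact hθ h0

lemma aux_C_T_mem {θ : ℂ} {b : ℤ} (hb : 0 ≤ b) :
    LaurentPolynomial.C θ * LaurentPolynomial.T b ∈
      Set.range (Polynomial.toLaurent (R := ℂ)) := by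
  refine ⟨Polynomial.C θ * Polynomial.X ^ b.toNat, ?_⟩
  rw [Polynomial.toLaurent_C_mul_X_pow, Int.toNat_of_nonneg hb]

lemma aux_isPolyForm_iff (f : RR) :
    IsPolyForm f ↔ f ∈ Polynomial.liftsRing (Polynomial.toLaurent (R := ℂ)) := by
  rw [← Polynomial.lifts_iff_liftsRing, Polynomial.lifts_iff_coeff_lifts]
  unfold IsPolyForm
  simp only [RingHom.mem_range, Set.mem_range]

lemma aux_alphaVal_pos (η : ℕ → ℤ) (hη0 : 0 < η 0) {j : ℕ} (hj : 1 ≤ j) :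
    0 < alphaVal η j := by
  have hmem : (η 0).toNat ∈ {α : ℕ | 0 < α ∧ ∃ β : ℕ → ℤ,
      (α : ℤ) * η j = ∑ i ∈ Finset.range j, β i * η i} := by
    refine ⟨by omega, fun i => if i = 0 then η j else 0, ?_⟩
    rw [Finset.sum_eq_single_of_mem 0 (Finset.mem_range.mpr hj)
      (fun i _ hne => by simp [hne])]
    simp [Int.toNat_of_nonneg hη0.le]
    ring
  have := Nat.sInf_mem (Set.nonempty_of_mem hmem)
  exact this.1

lemma aux_alphaVal_min (η : ℕ → ℤ) {j : ℕ} {k : ℤ} (hk : k ≠ 0)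
    (h : ∃ β : ℕ → ℤ, k * η j = ∑ i ∈ Finset.range j, β i * η i) :
    (alphaVal η j : ℤ) ≤ |k| := by
  obtain ⟨β, hβ⟩ := h
  have hmem : k.natAbs ∈ {α : ℕ | 0 < α ∧ ∃ β : ℕ → ℤ,
      (α : ℤ) * η j = ∑ i ∈ Finset.range j, β i * η i} := by
    refine ⟨by omega, ?_⟩
    rcases le_or_gt 0 k with hk0 | hk0
    · exact ⟨β, by rwa [Int.natAbs_of_nonneg hk0]⟩
    · refine ⟨fun i => -(β i), ?_⟩
      have : (k.natAbs : ℤ) = -k := by omega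
      rw [this]
      rw [neg_mul, hβ, ← Finset.sum_neg_distrib]
      exact Finset.sum_congr rfl (fun i _ => by ring)
  have h1 := Nat.sInf_le hmem
  have h2 : (alphaVal η j : ℤ) ≤ (k.natAbs : ℤ) := by exact_mod_cast h1
  rwa [Int.abs_eq_natAbs]

lemma aux_b0_nonneg (η : ℕ → ℤ) (hη0 : 0 < η 0) :
    ∀ j, 1 ≤ j →
    (∀ i, 1 ≤ i → i < j → ∃ c : ℕ → ℕ,
        (alphaVal η i : ℤ) * η i = ∑ i' ∈ Finset.range i, (c i' : ℤ) * η i') →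
    ∀ (b : ℕ → ℤ) (c : ℕ → ℕ),
      (∀ i, 1 ≤ i → i < j → 0 ≤ b i ∧ b i < (alphaVal η i : ℤ)) →
      (∑ i ∈ Finset.range j, b i * η i = ∑ i ∈ Finset.range j, (c i : ℤ) * η i) →
      0 ≤ b 0 := by
  intro j hj
  induction j, hj using Nat.le_induction with
  | base =>
    intro _ b c _ hsum
    simp only [Finset.sum_range_one] at hsum
    have : b 0 = (c 0 : ℤ) := mul_right_cancel₀ (ne_of_gt hη0) hsum
    omega
  | succ j hj IH =>
    intro H b c hbnd hsum
    have hαpos : 0 < alphaVal η j := aux_alphaVal_pos η hη0 hj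
    obtain ⟨γ, hγ⟩ := H j hj (Nat.lt_succ_self j)
    set α := alphaVal η j with hα
    set q := c j / α with hq
    set r := c j % α with hr
    have hcj : c j = α * q + r := (Nat.div_add_mod (c j) α).symm
    have hrα : r < α := Nat.mod_lt _ hαpos
    set c' : ℕ → ℕ := fun i => c i + q * γ i with hc'
    have hkey : ∑ i ∈ Finset.range (j+1), (c i : ℤ) * η i
        = ∑ i ∈ Finset.range j, (c' i : ℤ) * η i + (r : ℤ) * η j := by
      rw [Finset.sum_range_succ]
      have : (c j : ℤ) * η j = (q : ℤ) * ((α : ℤ) * η j) + (r : ℤ) * η j := by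
        rw [hcj]; push_cast; ring
      rw [this, hγ, Finset.mul_sum, ← add_assoc, ← Finset.sum_add_distrib]
      congr 1
      exact Finset.sum_congr rfl (fun i _ => by simp only [hc']; push_cast; ring)
    rw [hkey, Finset.sum_range_succ] at hsum
    have hbj : b j = (r : ℤ) := by
      by_contra hne
      have hdiff : (b j - (r:ℤ)) * η j
          = ∑ i ∈ Finset.range j, ((c' i : ℤ) - b i) * η i := by
        have : ∑ i ∈ Finset.range j, ((c' i : ℤ) - b i) * η i
            = ∑ i ∈ Finset.range j, (c' i : ℤ) * η i
              - ∑ i ∈ Finset.range j, b i * η i := by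
          rw [← Finset.sum_sub_distrib]
          exact Finset.sum_congr rfl (fun i _ => by ring)
        rw [this]; linarith [hsum]
      have hmin := aux_alphaVal_min η (k := b j - (r:ℤ)) (by omega) ⟨_, hdiff⟩
      have hb := hbnd j hj (Nat.lt_succ_self j)
      have hrz : (r:ℤ) < (α:ℤ) := by exact_mod_cast hrα
      have hrz0 : (0:ℤ) ≤ (r:ℤ) := Int.natCast_nonneg r
      have habs : |b j - (r:ℤ)| < (alphaVal η j : ℤ) := abs_lt.mpr ⟨by omega, by omega⟩
      linarith
    have hsum' : ∑ i ∈ Finset.range j, b i * η i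
        = ∑ i ∈ Finset.range j, (c' i : ℤ) * η i := by
      rw [hbj] at hsum; linarith
    exact IH (fun i h1 h2 => H i h1 (by omega)) b c'
      (fun i h1 h2 => hbnd i h1 (by omega)) hsum'

/-- Proposition `key-properties`, assertion (2). -/
theorem keyforms_polynomial_iff_semigroup (n : ℕ) (D : KeyFormDatum n)
    (m : ℕ) (hm : m ≤ n) :
    (∀ i, i ≤ m + 1 → IsPolyForm (D.g i)) ↔
      (∀ i, 1 ≤ i → i ≤ m → ∃ β : ℕ → ℕ,
        (alphaVal D.η i : ℤ) * D.η i = ∑ i' ∈ Finset.range i, (β i' : ℤ) * D.η i') := by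
  constructor
  · intro ha i h1 hi
    obtain ⟨β, θ, hθ, hbnd, -, hsum, hgeq⟩ := D.hrec i h1 (le_trans hi hm)
    set H : RR := ∏ i' ∈ Finset.Ico 1 i, D.g i' ^ (β i').toNat with hH
    have hHmonic : H.Monic := by
      refine Polynomial.monic_prod_of_monic _ _ (fun i' hi' => ?_)
      rw [Finset.mem_Ico] at hi'
      exact (D.hmonic i' hi'.1 (by omega)).pow _
    have hP : IsPolyForm (Polynomial.C (LaurentPolynomial.C θ * LaurentPolynomial.T (β 0)) * H) := by
      have hPg : Polynomial.C (LaurentPolynomial.C θ * LaurentPolynomial.T (β 0)) * H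
          = D.g i ^ (alphaVal D.η i) - D.g (i + 1) := by
        rw [hgeq]; ring
      rw [aux_isPolyForm_iff, hPg]
      exact Subring.sub_mem _
        (pow_mem ((aux_isPolyForm_iff _).1 (ha i (by omega))) _)
        ((aux_isPolyForm_iff _).1 (ha (i+1) (by omega)))
    have hcoeff := hP H.natDegree
    rw [Polynomial.coeff_C_mul, hHmonic.coeff_natDegree, mul_one] at hcoeff
    obtain ⟨p, hp⟩ := hcoeff
    have hb0 : 0 ≤ β 0 := aux_C_T_nonneg hθ ⟨p, hp⟩
    refine ⟨fun i' => (β i').toNat, ?_⟩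
    rw [hsum]
    refine Finset.sum_congr rfl (fun i' hi' => ?_)
    congr 1
    rcases Nat.eq_zero_or_pos i' with h0 | h0
    · subst h0; rw [Int.toNat_of_nonneg hb0]
    · rw [Int.toNat_of_nonneg (hbnd i' h0 (Finset.mem_range.mp hi')).1]
  · intro hb
    intro i
    induction i using Nat.strong_induction_on with
    | _ i IH =>
      intro hi
      match i, IH, hi with
      | 0, _, _ =>
        rw [D.hg0]
        exact (aux_isPolyForm_iff _).2 ((Polynomial.lifts_iff_liftsRing (f := Polynomial.toLaurent (R := ℂ)) _).mp
          (Polynomial.C'_mem_lifts ⟨Polynomial.X, Polynomial.toLaurent_X⟩))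
      | 1, _, _ =>
        rw [D.hg1]
        exact (aux_isPolyForm_iff _).2 ((Polynomial.lifts_iff_liftsRing (f := Polynomial.toLaurent (R := ℂ)) _).mp
          (Polynomial.X_mem_lifts _))
      | (k+2), IH, hi =>
        have hjm : k + 1 ≤ m := by omega
        obtain ⟨β, θ, hθ, hbnd, -, hsum, hgeq⟩ :=
          D.hrec (k+1) (by omega) (le_trans hjm hm)
        obtain ⟨c, hc⟩ := hb (k+1) (by omega) hjm
        have hb0 : 0 ≤ β 0 := by
          refine aux_b0_nonneg D.η D.hη0 (k+1) (by omega)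
            (fun i' h1 h2 => hb i' h1 (by omega)) β c hbnd ?_
          rw [← hsum, hc]
        rw [hgeq, aux_isPolyForm_iff]
        refine Subring.sub_mem _
          (pow_mem ((aux_isPolyForm_iff _).1 (IH (k+1) (by omega) (by omega))) _)
          (mul_mem ?_ ?_)
        · exact (Polynomial.lifts_iff_liftsRing (f := Polynomial.toLaurent (R := ℂ)) _).mp
            (Polynomial.C'_mem_lifts (aux_C_T_mem hb0))
        · refine prod_mem (fun i' hi' => ?_)
          rw [Finset.mem_Ico] at hi'
          exact pow_mem ((aux_isPolyForm_iff _).1 (IH i' (by omega) (by omega))) _
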